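/- Let B₁, B₂ be normal crystals. Suppose the set B₁ × B₂ (elements written b₁ ⊗ b₂) is given a normal crystal structure such that: (a) wt(b₁ ⊗ b₂) = wt(b₁) + wt(b₂) for all b₁ ∈ B₁, b₂ ∈ B₂; and (b) whenever ε_k(b₁ ⊗ b₂) = 0 one has ε_k(b₁ ⊗ b₂) = max(ε_k(b₁), ε_k(b₂) − wt_k(b₁)), ẽ_k(b₁ ⊗ b₂) = (ẽ_k b₁) ⊗ b₂ if φ_k(b₁) ≥ ε_k(b₂) and b₁ ⊗ (ẽ_k b₂) otherwise, and for every r ≥ 0: f̃_k^r(b₁ ⊗ b₂) = (f̃_k^r b₁) ⊗ b₂ if r ≤ wt_k(b₁) − ε_k(b₂), and f̃_k^r(b₁ ⊗ b₂) = (f̃_k^{wt_k(b₁) − ε_k(b₂)} b₁) ⊗ (f̃_k^{r − wt_k(b₁) + ε_k(b₂)} b₂) otherwise. Then this crystal structure coincides with the tensor product crystal structure of B₁ ⊗ B₂: all of wt, ε_k, φ_k, ẽ_k, f̃_k agree with those of B₁ ⊗ B₂. -/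

import Mathlib

/-!
Crystals associated with a root datum: a free `ℤ`-module `P` (weight lattice),
simple roots `α k ∈ P` and simple coroots `co k : P →+ ℤ` for `k` in an index
set `I`.  The string functions `ε, φ` take values in `ℤ ∪ {−∞}`, modeled by
`WithBot ℤ`, and the Kashiwara operators `ẽ, f̃` take values in `B ⊔ {0}`,
modeled by `Option B` (`none` playing the role of `0`).
-/

noncomputable section

/-- The underlying data of a crystal on a set `B`. -/
structure PreCrystal (I : Type*) (P : Type*) (B : Type*) where
  wt : B → P
  eps : I → B → WithBot ℤ
  phi : I → B → WithBot ℤ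
  e : I → B → Option B
  f : I → B → Option B

/-- The crystal axioms (i)–(v). -/
structure IsCrystal {I P B : Type*} [AddCommGroup P]
    (α : I → P) (co : I → P →+ ℤ) (c : PreCrystal I P B) : Prop where
  phi_eq : ∀ k b, c.phi k b = c.eps k b + (co k (c.wt b) : WithBot ℤ)
  wt_e : ∀ k b b', c.e k b = some b' → c.wt b' = c.wt b + α k
  eps_e : ∀ k b b', c.e k b = some b' → c.eps k b' + 1 = c.eps k b
  phi_e : ∀ k b b', c.e k b = some b' → c.phi k b' = c.phi k b + 1
  wt_f : ∀ k b b', c.f k b = some b' → c.wt b' = c.wt b - α k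
  eps_f : ∀ k b b', c.f k b = some b' → c.eps k b' = c.eps k b + 1
  phi_f : ∀ k b b', c.f k b = some b' → c.phi k b' + 1 = c.phi k b
  ef_iff : ∀ k b b', c.f k b = some b' ↔ c.e k b' = some b
  e_bot : ∀ k b, c.phi k b = ⊥ → c.e k b = none
  f_bot : ∀ k b, c.phi k b = ⊥ → c.f k b = none

/-- `n`-th iterate `ẽ_k^n` of the Kashiwara operator `ẽ_k` (with value in
`B ⊔ {0}`, where `0` is absorbing). -/
def PreCrystal.eIter {I P B : Type*} (c : PreCrystal I P B) (k : I) :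
    ℕ → B → Option B
  | 0, b => some b
  | n + 1, b => (c.e k b).bind (c.eIter k n)

/-- `n`-th iterate `f̃_k^n` of the Kashiwara operator `f̃_k`. -/
def PreCrystal.fIter {I P B : Type*} (c : PreCrystal I P B) (k : I) :
    ℕ → B → Option B
  | 0, b => some b
  | n + 1, b => (c.f k b).bind (c.fIter k n)

/-- A crystal is normal if `ε_k(b) = max {n ≥ 0 : ẽ_k^n b ≠ 0}` and
`φ_k(b) = max {n ≥ 0 : f̃_k^n b ≠ 0}`. -/
def PreCrystal.IsNormal {I P B : Type*} (c : PreCrystal I P B) : Prop :=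
  ∀ (k : I) (b : B),
    (∃ n : ℕ, c.eIter k n b ≠ none ∧ c.eIter k (n + 1) b = none ∧
      c.eps k b = ((n : ℤ) : WithBot ℤ)) ∧
    (∃ n : ℕ, c.fIter k n b ≠ none ∧ c.fIter k (n + 1) b = none ∧
      c.phi k b = ((n : ℤ) : WithBot ℤ))

/-- The tensor product data on `B₁ × B₂`:
`wt(b₁⊗b₂) = wt b₁ + wt b₂`, `ε_k(b₁⊗b₂) = max(ε_k(b₁), ε_k(b₂) − wt_k(b₁))`,
`φ_k(b₁⊗b₂) = max(φ_k(b₂), φ_k(b₁) + wt_k(b₂))`,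
`ẽ_k` acts on the first factor if `φ_k(b₁) ≥ ε_k(b₂)` and on the second one
otherwise, and `f̃_k` acts on the first factor if `φ_k(b₁) > ε_k(b₂)` and on
the second one otherwise (with `b₁ ⊗ 0 = 0 ⊗ b₂ = 0`, via `Option.map`). -/
def PreCrystal.tensor {I P B₁ B₂ : Type*} [AddCommGroup P] (co : I → P →+ ℤ)
    (c₁ : PreCrystal I P B₁) (c₂ : PreCrystal I P B₂) :
    PreCrystal I P (B₁ × B₂) where
  wt b := c₁.wt b.1 + c₂.wt b.2
  eps k b := max (c₁.eps k b.1) (c₂.eps k b.2 + ((-(co k (c₁.wt b.1)) : ℤ) : WithBot ℤ))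
  phi k b := max (c₂.phi k b.2) (c₁.phi k b.1 + ((co k (c₂.wt b.2) : ℤ) : WithBot ℤ))
  e k b :=
    if c₂.eps k b.2 ≤ c₁.phi k b.1 then (c₁.e k b.1).map fun x => (x, b.2)
    else (c₂.e k b.2).map fun x => (b.1, x)
  f k b :=
    if c₂.eps k b.2 < c₁.phi k b.1 then (c₁.f k b.1).map fun x => (x, b.2)
    else (c₂.f k b.2).map fun x => (b.1, x)
namespace PreCrystal
variable {I P B : Type*} {c : PreCrystal I P B} {k : I}

lemma fIter_one (b : B) : c.fIter k 1 b = c.f k b := by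
  cases h : c.f k b <;> simp [fIter, h]

lemma eIter_one (b : B) : c.eIter k 1 b = c.e k b := by
  cases h : c.e k b <;> simp [eIter, h]

lemma fIter_succ_right (n : ℕ) (b : B) :
    c.fIter k (n + 1) b = (c.fIter k n b).bind (c.f k) := by
  induction n generalizing b with
  | zero => simp [fIter, fIter_one]
  | succ n ih =>
    cases h : c.f k b with
    | none => simp [fIter, h]
    | some b' =>
      simp only [fIter, h, Option.bind_some]
      exact ih b'

lemma eIter_succ_right (n : ℕ) (b : B) :
    c.eIter k (n + 1) b = (c.eIter k n b).bind (c.e k) := by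
  induction n generalizing b with
  | zero => simp [eIter, eIter_one]
  | succ n ih =>
    cases h : c.e k b with
    | none => simp [eIter, h]
    | some b' =>
      simp only [eIter, h, Option.bind_some]
      exact ih b'

lemma fIter_ne_none_mono {i j : ℕ} (hij : i ≤ j) {b : B}
    (h : c.fIter k j b ≠ none) : c.fIter k i b ≠ none := by
  induction j with
  | zero => simpa [Nat.le_zero.mp hij] using h
  | succ j ih =>
    rcases Nat.lt_or_ge i (j+1) with hi | hi
    · refine ih (Nat.lt_succ_iff.mp hi) ?_
      rw [fIter_succ_right] at h
      intro hn; rw [hn] at h; simp at h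
    · exact (Nat.le_antisymm hij hi) ▸ h

lemma eIter_ne_none_mono {i j : ℕ} (hij : i ≤ j) {b : B}
    (h : c.eIter k j b ≠ none) : c.eIter k i b ≠ none := by
  induction j with
  | zero => simpa [Nat.le_zero.mp hij] using h
  | succ j ih =>
    rcases Nat.lt_or_ge i (j+1) with hi | hi
    · refine ih (Nat.lt_succ_iff.mp hi) ?_
      rw [eIter_succ_right] at h
      intro hn; rw [hn] at h; simp at h
    · exact (Nat.le_antisymm hij hi) ▸ h

end PreCrystal
namespace PreCrystal
section
variable {I P B : Type*} [AddCommGroup P] {α : I → P} {co : I → P →+ ℤ}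
  {c : PreCrystal I P B} (hc : IsCrystal α co c) {k : I}

/-- cast helper -/
lemma natCast_succ_wb (n : ℕ) :
    (((n+1:ℕ):ℤ) : WithBot ℤ) = ((n:ℤ):WithBot ℤ) + 1 := by
  push_cast; ring_nf

include hc in
lemma eIter_iff_fIter : ∀ (n : ℕ) (b b' : B),
    c.eIter k n b = some b' ↔ c.fIter k n b' = some b := by
  intro n
  induction n with
  | zero => intro b b'; simp [eIter, fIter, eq_comm]
  | succ n ih =>
    intro b b'
    constructor
    · intro h
      simp only [eIter] at h
      rcases Option.bind_eq_some_iff.mp h with ⟨b₀, hb₀, hIter⟩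
      rw [fIter_succ_right, (ih b₀ b').mp hIter, Option.bind_some]
      exact (hc.ef_iff k b₀ b).mpr hb₀
    · intro h
      rw [fIter_succ_right] at h
      rcases Option.bind_eq_some_iff.mp h with ⟨b₀, hb₀, hf⟩
      have he : c.e k b = some b₀ := (hc.ef_iff k b₀ b).mp hf
      simp only [eIter, he, Option.bind_some]
      exact (ih b₀ b').mpr hb₀

include hc in
lemma fIter_stats : ∀ (n : ℕ) (b b' : B), c.fIter k n b = some b' →
    c.eps k b' = c.eps k b + ((n:ℤ) : WithBot ℤ) ∧
    c.phi k b' + ((n:ℤ) : WithBot ℤ) = c.phi k b := by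
  intro n
  induction n with
  | zero =>
    intro b b' h
    simp only [fIter, Option.some_inj] at h
    subst h
    norm_num
  | succ n ih =>
    intro b b' h
    simp only [fIter] at h
    rcases Option.bind_eq_some_iff.mp h with ⟨b₀, hb₀, hIter⟩
    obtain ⟨ihe, ihp⟩ := ih b₀ b' hIter
    constructor
    · rw [ihe, hc.eps_f k b b₀ hb₀, natCast_succ_wb, add_assoc,
        add_comm (1 : WithBot ℤ)]
    · rw [natCast_succ_wb, ← add_assoc, ihp]
      exact hc.phi_f k b b₀ hb₀

end
end PreCrystal
namespace PreCrystal
section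
variable {I P B : Type*} {c : PreCrystal I P B} (hn : c.IsNormal) {k : I} {b : B}

include hn in
lemma phi_natCast : ∃ m : ℕ, c.phi k b = ((m:ℤ) : WithBot ℤ) :=
  ⟨(hn k b).2.choose, (hn k b).2.choose_spec.2.2⟩

include hn in
lemma eps_natCast : ∃ m : ℕ, c.eps k b = ((m:ℤ) : WithBot ℤ) :=
  ⟨(hn k b).1.choose, (hn k b).1.choose_spec.2.2⟩

include hn in
lemma fIter_ne_none_of_le {m : ℕ} (hphi : c.phi k b = ((m:ℤ) : WithBot ℤ))
    {r : ℕ} (hr : r ≤ m) : c.fIter k r b ≠ none := by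
  obtain ⟨m', h1, h2, h3⟩ := (hn k b).2
  have hm : m' = m := by rw [hphi] at h3; exact_mod_cast h3.symm
  exact fIter_ne_none_mono (hm ▸ hr) h1

include hn in
lemma fIter_eq_none_of_lt {m : ℕ} (hphi : c.phi k b = ((m:ℤ) : WithBot ℤ))
    {r : ℕ} (hr : m < r) : c.fIter k r b = none := by
  obtain ⟨m', h1, h2, h3⟩ := (hn k b).2
  have hm : m' = m := by rw [hphi] at h3; exact_mod_cast h3.symm
  subst hm
  by_contra h
  exact (fIter_ne_none_mono hr h) h2

include hn in
lemma f_eq_none_iff : c.f k b = none ↔ c.phi k b = 0 := by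
  obtain ⟨m, h1, h2, h3⟩ := (hn k b).2
  rw [← fIter_one, h3]
  cases m with
  | zero => simp only [h2]; norm_num
  | succ m =>
    constructor
    · intro h; exact absurd (fIter_ne_none_mono (Nat.succ_le_succ (Nat.zero_le m)) h1) (by simp [h])
    · intro h
      exfalso
      have : ((m+1:ℕ):ℤ) = (0:ℤ) := by exact_mod_cast h
      omega

include hn in
lemma e_eq_none_iff : c.e k b = none ↔ c.eps k b = 0 := by
  obtain ⟨m, h1, h2, h3⟩ := (hn k b).1
  rw [← eIter_one, h3]
  cases m with
  | zero => simp only [h2]; norm_num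
  | succ m =>
    constructor
    · intro h; exact absurd (eIter_ne_none_mono (Nat.succ_le_succ (Nat.zero_le m)) h1) (by simp [h])
    · intro h
      exfalso
      have : ((m+1:ℕ):ℤ) = (0:ℤ) := by exact_mod_cast h
      omega

end
end PreCrystal
namespace PreCrystal

lemma map₂_some_right {A B : Type*} (o : Option A) (b : B) :
    Option.map₂ Prod.mk o (some b) = o.map (fun x => (x, b)) := by
  cases o <;> rfl

lemma map₂_some_left {A B : Type*} (a : A) (o : Option B) :
    Option.map₂ Prod.mk (some a) o = o.map (fun x => (a, x)) := by
  cases o <;> rfl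

theorem key {I P B₁ B₂ : Type*} [AddCommGroup P]
    (α : I → P) (co : I → P →+ ℤ)
    (c₁ : PreCrystal I P B₁) (c₂ : PreCrystal I P B₂)
    (h₁ : IsCrystal α co c₁) (h₂ : IsCrystal α co c₂)
    (n₁ : c₁.IsNormal) (n₂ : c₂.IsNormal)
    (d : PreCrystal I P (B₁ × B₂))
    (hd : IsCrystal α co d) (nd : d.IsNormal)
    (heps : ∀ (k : I) (b : B₁ × B₂), d.eps k b = 0 →
      d.eps k b
        = max (c₁.eps k b.1)
            (c₂.eps k b.2 + ((-(co k (c₁.wt b.1)) : ℤ) : WithBot ℤ)))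
    (hf₁ : ∀ (k : I) (b : B₁ × B₂), d.eps k b = 0 → ∀ r : ℕ,
      ((r : ℤ) : WithBot ℤ) + c₂.eps k b.2 ≤ ((co k (c₁.wt b.1) : ℤ) : WithBot ℤ) →
      d.fIter k r b = (c₁.fIter k r b.1).map (fun x => (x, b.2)))
    (hf₂ : ∀ (k : I) (b : B₁ × B₂), d.eps k b = 0 → ∀ r s : ℕ,
      ¬(((r : ℤ) : WithBot ℤ) + c₂.eps k b.2
          ≤ ((co k (c₁.wt b.1) : ℤ) : WithBot ℤ)) →
      ((s : ℤ) : WithBot ℤ) + c₂.eps k b.2 = ((co k (c₁.wt b.1) : ℤ) : WithBot ℤ) →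
      d.fIter k r b
        = Option.map₂ Prod.mk (c₁.fIter k s b.1) (c₂.fIter k (r - s) b.2))
    (k : I) (b : B₁ × B₂) :
    d.eps k b = (c₁.tensor co c₂).eps k b ∧ d.e k b = (c₁.tensor co c₂).e k b ∧
      d.f k b = (c₁.tensor co c₂).f k b := by
  obtain ⟨⟨N, hN1, hN2, hN3⟩, -⟩ := nd k b
  obtain ⟨bs, hbs⟩ := Option.ne_none_iff_exists'.mp hN1
  have hfb : d.fIter k N bs = some b := (eIter_iff_fIter hd N b bs).mp hbs
  -- d.eps k bs = 0
  obtain ⟨me, hme⟩ := eps_natCast nd (k := k) (b := bs)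
  have hstat := (fIter_stats hd N bs b hfb).1
  have hme0 : me = 0 := by
    rw [hN3, hme] at hstat
    have : (N:ℤ) = me + N := by exact_mod_cast hstat
    omega
  have hbs0 : d.eps k bs = 0 := by rw [hme, hme0]; norm_cast
  -- numeric data at the top of the string
  obtain ⟨e1, he1⟩ := eps_natCast n₁ (k := k) (b := bs.1)
  obtain ⟨p1, hp1⟩ := phi_natCast n₁ (k := k) (b := bs.1)
  obtain ⟨e2, he2⟩ := eps_natCast n₂ (k := k) (b := bs.2)
  obtain ⟨p2, hp2⟩ := phi_natCast n₂ (k := k) (b := bs.2)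
  have hp1w : (p1:ℤ) = (e1:ℤ) + co k (c₁.wt bs.1) := by
    have := h₁.phi_eq k bs.1
    rw [hp1, he1] at this
    exact_mod_cast this
  have hmax : (0:ℤ) = max (e1:ℤ) ((e2:ℤ) - co k (c₁.wt bs.1)) := by
    have := heps k bs hbs0
    rw [hbs0, he1, he2] at this
    have h' : ((0:ℤ) : WithBot ℤ)
        = max ((e1:ℤ) : WithBot ℤ) (((e2:ℤ) : WithBot ℤ)
          + ((-(co k (c₁.wt bs.1)) : ℤ) : WithBot ℤ)) := by
      rw [← this]; norm_cast
    exact_mod_cast h'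
  have he10 : e1 = 0 := by omega
  have he2p1 : e2 ≤ p1 := by omega
  set t : ℕ := p1 - e2 with ht
  -- the string through bs
  have Hr : ∀ r : ℕ, d.fIter k r bs
      = Option.map₂ Prod.mk (c₁.fIter k (min r t) bs.1)
          (c₂.fIter k (r - t) bs.2) := by
    intro r
    rcases le_or_gt r t with hrt | hrt
    · have hcond : ((r : ℤ) : WithBot ℤ) + c₂.eps k bs.2
          ≤ ((co k (c₁.wt bs.1) : ℤ) : WithBot ℤ) := by
        rw [he2]
        exact_mod_cast (show (r:ℤ) + e2 ≤ co k (c₁.wt bs.1) by omega)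
      rw [hf₁ k bs hbs0 r hcond, min_eq_left hrt, Nat.sub_eq_zero_of_le hrt]
      exact (map₂_some_right _ _).symm
    · have hcond : ¬(((r : ℤ) : WithBot ℤ) + c₂.eps k bs.2
          ≤ ((co k (c₁.wt bs.1) : ℤ) : WithBot ℤ)) := by
        rw [he2]
        have h' : ¬((r:ℤ) + e2 ≤ co k (c₁.wt bs.1)) := by omega
        exact_mod_cast h'
      have hs : ((t : ℤ) : WithBot ℤ) + c₂.eps k bs.2
          = ((co k (c₁.wt bs.1) : ℤ) : WithBot ℤ) := by
        rw [he2]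
        exact_mod_cast (show (t:ℤ) + e2 = co k (c₁.wt bs.1) by omega)
      rw [hf₂ k bs hbs0 r t hcond hs, min_eq_right hrt.le]
  -- coordinates of b
  set n1 : ℕ := min N t with hn1
  set n2 : ℕ := N - t with hn2
  have hb' := Hr N
  rw [hfb] at hb'
  obtain ⟨b₁, hb₁⟩ := Option.ne_none_iff_exists'.mp
    (show c₁.fIter k n1 bs.1 ≠ none by
      intro h; rw [h] at hb'; simp [Option.map₂] at hb')
  obtain ⟨b₂, hb₂⟩ := Option.ne_none_iff_exists'.mp
    (show c₂.fIter k n2 bs.2 ≠ none by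
      intro h; rw [h] at hb'; simp [Option.map₂] at hb')
  rw [hb₁, hb₂] at hb'
  simp only [Option.map₂, Option.bind_some, Option.map_some, Option.some_inj] at hb'
  subst hb'
  -- statistics of the coordinates
  obtain ⟨hEb₁, hPb₁⟩ := fIter_stats h₁ n1 bs.1 b₁ hb₁
  obtain ⟨hEb₂, hPb₂⟩ := fIter_stats h₂ n2 bs.2 b₂ hb₂
  obtain ⟨q1, hq1⟩ := phi_natCast n₁ (k := k) (b := b₁)
  obtain ⟨q2, hq2⟩ := phi_natCast n₂ (k := k) (b := b₂)
  have hq1z : (q1:ℤ) + n1 = p1 := by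
    rw [hq1, hp1] at hPb₁; exact_mod_cast hPb₁
  have hq2z : (q2:ℤ) + n2 = p2 := by
    rw [hq2, hp2] at hPb₂; exact_mod_cast hPb₂
  have hEb₁' : c₁.eps k b₁ = (((e1 + n1 : ℕ) : ℤ) : WithBot ℤ) := by
    rw [hEb₁, he1]; norm_cast
  have hEb₂' : c₂.eps k b₂ = (((e2 + n2 : ℕ) : ℤ) : WithBot ℤ) := by
    rw [hEb₂, he2]; norm_cast
  have hw1' : (q1:ℤ) = ((e1 + n1 : ℕ) : ℤ) + co k (c₁.wt b₁) := by
    have := h₁.phi_eq k b₁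
    rw [hq1, hEb₁'] at this
    exact_mod_cast this
  refine ⟨?_, ?_, ?_⟩
  · -- eps
    show d.eps k (b₁, b₂) = max (c₁.eps k b₁)
      (c₂.eps k b₂ + ((-(co k (c₁.wt b₁)) : ℤ) : WithBot ℤ))
    rw [hN3, hEb₁', hEb₂']
    have hz : (N:ℤ) = max (((e1 + n1 : ℕ) : ℤ))
        ((((e2 + n2 : ℕ) : ℤ)) + (-(co k (c₁.wt b₁)))) := by
      push_cast at *
      omega
    exact_mod_cast hz
  · -- e
    show d.e k (b₁, b₂) = if c₂.eps k b₂ ≤ c₁.phi k b₁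
      then (c₁.e k b₁).map (fun x => (x, b₂)) else (c₂.e k b₂).map (fun x => (b₁, x))
    rcases Nat.eq_zero_or_pos N with hN0 | hNpos
    · -- N = 0 : both sides are none
      have hdnone : d.e k (b₁, b₂) = none := by
        rw [e_eq_none_iff nd, hN3, hN0]
        norm_cast
      have hifpos : c₂.eps k b₂ ≤ c₁.phi k b₁ := by
        rw [hEb₂', hq1]
        exact_mod_cast (show ((e2 + n2 : ℕ):ℤ) ≤ q1 by omega)
      have h1none : c₁.e k b₁ = none := by
        rw [e_eq_none_iff n₁, hEb₁']
        have : e1 + n1 = 0 := by omega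
        rw [this]; norm_cast
      rw [hdnone, if_pos hifpos, h1none]
      rfl
    · -- N ≥ 1
      have hprev := Hr (N - 1)
      obtain ⟨x, hx⟩ := Option.ne_none_iff_exists'.mp
        (show c₁.fIter k (min (N-1) t) bs.1 ≠ none from
          fIter_ne_none_mono (j := n1) (by omega) (by simp [hb₁]))
      obtain ⟨y, hy⟩ := Option.ne_none_iff_exists'.mp
        (show c₂.fIter k (N-1-t) bs.2 ≠ none from
          fIter_ne_none_mono (j := n2) (by omega) (by simp [hb₂]))
      rw [hx, hy] at hprev
      simp only [Option.map₂, Option.bind_some, Option.map_some] at hprev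
      have hfxy : d.f k (x, y) = some (b₁, b₂) := by
        have hsucc : d.fIter k ((N-1)+1) bs = (d.fIter k (N-1) bs).bind (d.f k) :=
          fIter_succ_right _ _
        rw [show (N-1)+1 = N by omega, hfb, hprev, Option.bind_some] at hsucc
        exact hsucc.symm
      have hde : d.e k (b₁, b₂) = some (x, y) := (hd.ef_iff k (x, y) (b₁, b₂)).mp hfxy
      rw [hde]
      rcases le_or_gt N t with hNt | hNt
      · -- N ≤ t : e acts on the first factor
        have hifpos : c₂.eps k b₂ ≤ c₁.phi k b₁ := by
          rw [hEb₂', hq1]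
          exact_mod_cast (show ((e2 + n2 : ℕ):ℤ) ≤ q1 by omega)
        rw [if_pos hifpos]
        have hy' : y = bs.2 := by
          rw [show N-1-t = 0 by omega] at hy
          simpa [fIter] using hy.symm
        have hb₂' : b₂ = bs.2 := by
          rw [show n2 = 0 by omega] at hb₂
          simpa [fIter] using hb₂.symm
        have hfx : c₁.f k x = some b₁ := by
          have hsucc := fIter_succ_right (c := c₁) (k := k) (N-1) bs.1
          rw [show (N-1)+1 = N by omega, show min (N-1) t = N-1 by omega] at *
          rw [show n1 = N by omega] at hb₁
          rw [hb₁, hx, Option.bind_some] at hsucc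
          exact hsucc.symm
        rw [(h₁.ef_iff k x b₁).mp hfx, Option.map_some]
        rw [hy', hb₂']
      · -- N > t : e acts on the second factor
        have hifneg : ¬(c₂.eps k b₂ ≤ c₁.phi k b₁) := by
          rw [hEb₂', hq1]
          have h' : ¬(((e2 + n2 : ℕ):ℤ) ≤ q1) := by omega
          exact_mod_cast h'
        rw [if_neg hifneg]
        have hx' : x = b₁ := by
          rw [show min (N-1) t = t by omega] at hx
          rw [show n1 = t by omega] at hb₁
          rw [hb₁] at hx
          exact (Option.some_inj.mp hx).symm
        have hfy : c₂.f k y = some b₂ := by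
          have hsucc := fIter_succ_right (c := c₂) (k := k) (N-1-t) bs.2
          rw [show (N-1-t)+1 = N-t by omega] at hsucc
          rw [show n2 = N-t by omega] at hb₂
          rw [hb₂, hy, Option.bind_some] at hsucc
          exact hsucc.symm
        rw [(h₂.ef_iff k y b₂).mp hfy, Option.map_some]
        rw [hx']
  · -- f
    show d.f k (b₁, b₂) = if c₂.eps k b₂ < c₁.phi k b₁
      then (c₁.f k b₁).map (fun x => (x, b₂)) else (c₂.f k b₂).map (fun x => (b₁, x))
    have hnext := Hr (N + 1)
    have hdf : d.f k (b₁, b₂) = d.fIter k (N+1) bs := by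
      rw [fIter_succ_right, hfb, Option.bind_some]
    rcases lt_or_ge N t with hNt | hNt
    · -- N < t : f acts on the first factor
      have hifpos : c₂.eps k b₂ < c₁.phi k b₁ := by
        rw [hEb₂', hq1]
        exact_mod_cast (show ((e2 + n2 : ℕ):ℤ) < q1 by omega)
      rw [if_pos hifpos]
      rw [show min (N+1) t = (N+1) by omega, show N+1-t = 0 by omega] at hnext
      have hf1 : c₁.fIter k (N+1) bs.1 = c₁.f k b₁ := by
        rw [fIter_succ_right, show n1 = N by omega] at *
        rw [hb₁, Option.bind_some]
      have hb₂' : b₂ = bs.2 := by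
        rw [show n2 = 0 by omega] at hb₂
        simpa [fIter] using hb₂.symm
      rw [hdf, hnext, hf1, hb₂']
      exact map₂_some_right _ _
    · -- N ≥ t : f acts on the second factor
      have hifneg : ¬(c₂.eps k b₂ < c₁.phi k b₁) := by
        rw [hEb₂', hq1]
        have h' : ¬(((e2 + n2 : ℕ):ℤ) < q1) := by omega
        exact_mod_cast h'
      rw [if_neg hifneg]
      rw [show min (N+1) t = t by omega, show N+1-t = (N-t)+1 by omega] at hnext
      have hf2 : c₂.fIter k ((N-t)+1) bs.2 = c₂.f k b₂ := by
        rw [fIter_succ_right, show n2 = N-t by omega] at *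
        rw [hb₂, Option.bind_some]
      rw [show n1 = t by omega] at hb₁
      rw [hdf, hnext, hf2, hb₁]
      exact map₂_some_left _ _

end PreCrystal
lemma PreCrystal.ext' {I P B : Type*} {c d : PreCrystal I P B}
    (h1 : ∀ b, c.wt b = d.wt b) (h2 : ∀ k b, c.eps k b = d.eps k b)
    (h3 : ∀ k b, c.phi k b = d.phi k b) (h4 : ∀ k b, c.e k b = d.e k b)
    (h5 : ∀ k b, c.f k b = d.f k b) : c = d := by
  cases c; cases d
  simp only [PreCrystal.mk.injEq]
  exact ⟨funext h1, funext fun k => funext (h2 k), funext fun k => funext (h3 k),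
    funext fun k => funext (h4 k), funext fun k => funext (h5 k)⟩

/-- let `B₁`, `B₂` be normal crystals, and suppose `B₁ × B₂`
carries a normal crystal structure `d` such that
(a) `wt(b₁ ⊗ b₂) = wt(b₁) + wt(b₂)`, and
(b) whenever `ε_k(b₁ ⊗ b₂) = 0`:
  `ε_k(b₁ ⊗ b₂) = max(ε_k(b₁), ε_k(b₂) − wt_k(b₁))`,
  `ẽ_k(b₁ ⊗ b₂) = (ẽ_k b₁) ⊗ b₂` if `φ_k(b₁) ≥ ε_k(b₂)` and `b₁ ⊗ (ẽ_k b₂)`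
  otherwise, and for every `r ≥ 0`:
  `f̃_k^r(b₁ ⊗ b₂) = (f̃_k^r b₁) ⊗ b₂` if `r ≤ wt_k(b₁) − ε_k(b₂)`, and
  `f̃_k^r(b₁ ⊗ b₂) = (f̃_k^{wt_k(b₁)−ε_k(b₂)} b₁) ⊗ (f̃_k^{r−wt_k(b₁)+ε_k(b₂)} b₂)`
  otherwise.
Then `d` coincides with the tensor product crystal structure on `B₁ ⊗ B₂`. -/
theorem tensor_structure_unique {I P B₁ B₂ : Type*} [AddCommGroup P]
    (α : I → P) (co : I → P →+ ℤ)
    (c₁ : PreCrystal I P B₁) (c₂ : PreCrystal I P B₂)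
    (h₁ : IsCrystal α co c₁) (h₂ : IsCrystal α co c₂)
    (n₁ : c₁.IsNormal) (n₂ : c₂.IsNormal)
    (d : PreCrystal I P (B₁ × B₂))
    (hd : IsCrystal α co d) (nd : d.IsNormal)
    (hwt : ∀ b : B₁ × B₂, d.wt b = c₁.wt b.1 + c₂.wt b.2)
    (heps : ∀ (k : I) (b : B₁ × B₂), d.eps k b = 0 →
      d.eps k b
        = max (c₁.eps k b.1)
            (c₂.eps k b.2 + ((-(co k (c₁.wt b.1)) : ℤ) : WithBot ℤ)))
    (he : ∀ (k : I) (b : B₁ × B₂), d.eps k b = 0 →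
      d.e k b
        = if c₂.eps k b.2 ≤ c₁.phi k b.1 then (c₁.e k b.1).map (fun x => (x, b.2))
          else (c₂.e k b.2).map (fun x => (b.1, x)))
    (hf₁ : ∀ (k : I) (b : B₁ × B₂), d.eps k b = 0 → ∀ r : ℕ,
      ((r : ℤ) : WithBot ℤ) + c₂.eps k b.2 ≤ ((co k (c₁.wt b.1) : ℤ) : WithBot ℤ) →
      d.fIter k r b = (c₁.fIter k r b.1).map (fun x => (x, b.2)))
    (hf₂ : ∀ (k : I) (b : B₁ × B₂), d.eps k b = 0 → ∀ r s : ℕ,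
      ¬(((r : ℤ) : WithBot ℤ) + c₂.eps k b.2
          ≤ ((co k (c₁.wt b.1) : ℤ) : WithBot ℤ)) →
      ((s : ℤ) : WithBot ℤ) + c₂.eps k b.2 = ((co k (c₁.wt b.1) : ℤ) : WithBot ℤ) →
      d.fIter k r b
        = Option.map₂ Prod.mk (c₁.fIter k s b.1) (c₂.fIter k (r - s) b.2)) :
    d = c₁.tensor co c₂ := by

  have key := fun (k : I) (b : B₁ × B₂) =>
    PreCrystal.key α co c₁ c₂ h₁ h₂ n₁ n₂ d hd nd heps hf₁ hf₂ k b
  refine PreCrystal.ext' (fun b => hwt b) (fun k b => (key k b).1) (fun k b => ?_)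
    (fun k b => (key k b).2.1) (fun k b => (key k b).2.2)
  -- phi
  show d.phi k b
    = max (c₂.phi k b.2) (c₁.phi k b.1 + ((co k (c₂.wt b.2) : ℤ) : WithBot ℤ))
  obtain ⟨e1, he1⟩ := PreCrystal.eps_natCast n₁ (k := k) (b := b.1)
  obtain ⟨p1, hp1⟩ := PreCrystal.phi_natCast n₁ (k := k) (b := b.1)
  obtain ⟨e2, he2⟩ := PreCrystal.eps_natCast n₂ (k := k) (b := b.2)
  obtain ⟨p2, hp2⟩ := PreCrystal.phi_natCast n₂ (k := k) (b := b.2)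
  have hp1w : (p1:ℤ) = (e1:ℤ) + co k (c₁.wt b.1) := by
    have := h₁.phi_eq k b.1
    rw [hp1, he1] at this
    exact_mod_cast this
  have hp2w : (p2:ℤ) = (e2:ℤ) + co k (c₂.wt b.2) := by
    have := h₂.phi_eq k b.2
    rw [hp2, he2] at this
    exact_mod_cast this
  have heq := (key k b).1
  have heq' : d.eps k b = max (c₁.eps k b.1)
      (c₂.eps k b.2 + ((-(co k (c₁.wt b.1)) : ℤ) : WithBot ℤ)) := heq
  rw [hd.phi_eq k b, hwt b, map_add, heq', he1, he2, hp1, hp2]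
  have hz : max ((e1:ℤ)) ((e2:ℤ) + -(co k (c₁.wt b.1)))
        + (co k (c₁.wt b.1) + co k (c₂.wt b.2))
      = max ((p2:ℤ)) ((p1:ℤ) + co k (c₂.wt b.2)) := by
    omega
  exact_mod_cast hz
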